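/- Let P be a finite poset and F ⊆ powerset(P) satisfying (F∩), (F↓), and (Pr). Then (P, F) satisfies the covering property (CP) if and only if it satisfies the Faigle exchange property (FEP): for any u, v ∈ P and S ∈ F with u ∉ S, v ∉ S, ⇓u ⊆ S, and v ∈ cl(S ∪ {u}), one has u ∈ cl(S ∪ {v}), where cl(X) = ⋂{Y ∈ F : X ⊆ Y}. -/

import Mathlib

/-- `X` is a down-set of the poset `P`. -/
def IsDownSet {P : Type*} [PartialOrder P] (X : Set P) : Prop :=
  ∀ ⦃x⦄, x ∈ X → ∀ ⦃y⦄, y ≤ x → y ∈ X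

/-- `Y` covers `X` in the poset `(F, ⊆)`. -/
def CoversIn {P : Type*} (F : Set (Set P)) (X Y : Set P) : Prop :=
  X ⊂ Y ∧ ∀ Z ∈ F, ¬(X ⊂ Z ∧ Z ⊂ Y)

/-- The closure operator associated to the closure system `F`:
`cl(X) = ⋂ {Y | Y ∈ F ∧ X ⊆ Y}`. -/
def clF {P : Type*} (F : Set (Set P)) (X : Set P) : Set P :=
  ⋂₀ {Y | Y ∈ F ∧ X ⊆ Y}

section aux

variable {P : Type*} [Finite P] {F : Set (Set P)}

lemma sInter_mem_of_subset (univ_mem : Set.univ ∈ F)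
    (inter_mem : ∀ X ∈ F, ∀ Y ∈ F, X ∩ Y ∈ F) {G : Set (Set P)} (hG : G ⊆ F) :
    ⋂₀ G ∈ F := by
  refine Set.Finite.induction_on (motive := fun G _ => G ⊆ F → ⋂₀ G ∈ F) G
    (Set.toFinite G) (fun _ => by simpa using univ_mem) ?_ hG
  intro a s _ _ ih hsub
  rw [Set.sInter_insert]
  exact inter_mem _ (hsub (Set.mem_insert _ _)) _
    (ih fun x hx => hsub (Set.mem_insert_of_mem _ hx))

lemma clF_mem (univ_mem : Set.univ ∈ F)
    (inter_mem : ∀ X ∈ F, ∀ Y ∈ F, X ∩ Y ∈ F) (X : Set P) :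
    clF F X ∈ F :=
  sInter_mem_of_subset univ_mem inter_mem (fun _ h => h.1)

lemma subset_clF (X : Set P) : X ⊆ clF F X :=
  fun _ hx => Set.mem_sInter.2 fun _ hY => hY.2 hx

lemma clF_subset {X Y : Set P} (hY : Y ∈ F) (hXY : X ⊆ Y) : clF F X ⊆ Y :=
  Set.sInter_subset_of_mem ⟨hY, hXY⟩

end aux

/-- Given (F∩), (F↓) and (Pr), the covering property (CP) is equivalent to the
Faigle exchange property (FEP). -/
theorem cp_iff_fep {P : Type*} [PartialOrder P] [Finite P] (F : Set (Set P))
    (univ_mem : Set.univ ∈ F)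
    (inter_mem : ∀ X ∈ F, ∀ Y ∈ F, X ∩ Y ∈ F)
    (down : ∀ X ∈ F, IsDownSet X)
    (empty_mem : ∅ ∈ F)
    (Iic_mem : ∀ u : P, Set.Iic u ∈ F)
    (Iio_mem : ∀ u : P, Set.Iio u ∈ F) :
    (∀ (u : P), ∀ X ∈ F, u ∉ X → Set.Iio u ⊆ X →
        ∃ Y ∈ F, u ∈ Y ∧ CoversIn F X Y)
      ↔
    (∀ (u v : P), ∀ S ∈ F, u ∉ S → v ∉ S → Set.Iio u ⊆ S →
        v ∈ clF F (S ∪ {u}) → u ∈ clF F (S ∪ {v})) := by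
  constructor
  · -- CP ⇒ FEP
    intro cp u v S hS huS hvS hio hv
    by_contra hu
    obtain ⟨Y, hYF, huY, hcov⟩ := cp u S hS huS hio
    have hSY : S ⊆ Y := hcov.1.1
    have hSuY : S ∪ {u} ⊆ Y := Set.union_subset hSY (by simpa using huY)
    have hvY : v ∈ Y := clF_subset hYF hSuY hv
    set B := clF F (S ∪ {v}) with hBdef
    have hBF : B ∈ F := clF_mem univ_mem inter_mem _
    have hSB : S ⊆ B := (Set.subset_union_left).trans (subset_clF _)
    have hvB : v ∈ B := subset_clF _ (Set.mem_union_right _ rfl)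
    refine hcov.2 (Y ∩ B) (inter_mem _ hYF _ hBF) ⟨?_, ?_⟩
    · exact ⟨Set.subset_inter hSY hSB, fun h => hvS (h ⟨hvY, hvB⟩)⟩
    · exact ⟨Set.inter_subset_left, fun h => hu (h huY).2⟩
  · -- FEP ⇒ CP
    intro fep u X hX huX hio
    have hYF : clF F (X ∪ {u}) ∈ F := clF_mem univ_mem inter_mem _
    have huY : u ∈ clF F (X ∪ {u}) := subset_clF _ (Set.mem_union_right _ rfl)
    refine ⟨clF F (X ∪ {u}), hYF, huY, ⟨?_, ?_⟩, ?_⟩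
    · exact (Set.subset_union_left).trans (subset_clF _)
    · exact fun h => huX (h huY)
    · rintro Z hZ ⟨h1, h2⟩
      have huZ : u ∉ Z := fun h =>
        h2.2 (clF_subset hZ (Set.union_subset h1.1 (by simpa using h)))
      obtain ⟨v, hvZ, hvX⟩ := Set.exists_of_ssubset h1
      have hv : v ∈ clF F (X ∪ {u}) := h2.1 hvZ
      have := fep u v X hX huX hvX hio hv
      exact huZ (clF_subset hZ (Set.union_subset h1.1 (by simpa using hvZ)) this)
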